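/- Let T be a tree satisfying Conditions (C1) and (C2), let M and N be two ν-matchings of 𝒩(T), and suppose N_T[r] ∈ M and N_T[t] ∈ N satisfy N_T[r] ∩ N_T[t] = {s} with deg_T(r) ≥ 2 and deg_T(t) ≥ 2 (so r, s, t is a path in T). Then deg_T(s) = 2 in each of the following two cases: (a) letting T_1 be the connected component of T \ {r} containing t, one has |N_{T_1}| = |M_{T_1}| + 1, where M_{T_1} = {F ∈ M : F ⊆ V(T_1)} and N_{T_1} = {F ∈ N : F ⊆ V(T_1)}; (b) N_T[r] is disjoint from every facet of N other than N_T[t]. -/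

import Mathlib

open scoped Classical
open SimpleGraph Finset MvPolynomial

variable {V : Type*}

/-- The closed neighborhood `N_G[u]` of a vertex, as a finite set. -/
noncomputable def closedNbhd [Fintype V] (G : SimpleGraph V) (u : V) : Finset V :=
  insert u (G.neighborFinset u)

/-- `F` is a facet of the closed neighborhood complex `𝒩(G)`:
`F = N_G[u]` for some vertex `u`, and no closed neighborhood of another vertex is
contained in `N_G[u]`. -/
def IsNFacet [Fintype V] (G : SimpleGraph V) (F : Finset V) : Prop :=
  ∃ u : V, F = closedNbhd G u ∧
    ∀ v : V, v ≠ u → ¬ closedNbhd G v ⊆ closedNbhd G u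

/-- A `k`-matching of `𝒩(G)`: a set of `k` pairwise disjoint facets of `𝒩(G)`. -/
def IsNMatching [Fintype V] (G : SimpleGraph V) (k : ℕ) (M : Finset (Finset V)) : Prop :=
  M.card = k ∧ (∀ F ∈ M, IsNFacet G F) ∧
    ∀ F ∈ M, ∀ F' ∈ M, F ≠ F' → Disjoint F F'

/-- The vertex set (inside `V`) of the connected component `c` of the induced subgraph
of `G` on `V \ {u}`. -/
def compVerts [Fintype V] (G : SimpleGraph V) (u : V)
    (c : (SimpleGraph.induce {v : V | v ≠ u} G).ConnectedComponent) : Set V :=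
  {v : V | ∃ h : v ≠ u, (SimpleGraph.induce {v : V | v ≠ u} G).connectedComponentMk ⟨v, h⟩ = c}

/-- For a matching `M` and a set `W` of vertices, the subcollection
`M_W = {F ∈ M : F ⊆ W}`. -/
noncomputable def matchPart (M : Finset (Finset V)) (W : Set V) : Finset (Finset V) :=
  M.filter (fun F => ∀ v ∈ F, v ∈ W)

/-- Condition (C1): `T` does not contain a path `r₁, r, s, t, t₁` with `deg_T(s) ≥ 3`
together with a `(ν−1)`-matching `Y` such that `{N_T[r]} ∪ Y` and `{N_T[t]} ∪ Y` are two
distinct `ν`-matchings of `𝒩(T)`. -/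
def CondC1 [Fintype V] (G : SimpleGraph V) (ν : ℕ) : Prop :=
  ¬ ∃ r1 r s t t1 : V,
      List.Pairwise (· ≠ ·) [r1, r, s, t, t1] ∧
      G.Adj r1 r ∧ G.Adj r s ∧ G.Adj s t ∧ G.Adj t t1 ∧
      3 ≤ G.degree s ∧
      ∃ Y : Finset (Finset V),
        IsNMatching G (ν - 1) Y ∧
        IsNMatching G ν (insert (closedNbhd G r) Y) ∧
        IsNMatching G ν (insert (closedNbhd G t) Y) ∧
        insert (closedNbhd G r) Y ≠ insert (closedNbhd G t) Y

/-- Condition (C2): `T` does not contain a path `p₁ = r, p₂, …, p_{3n−1} = s` (`n ≥ 1`,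
indexed here from `0` to `3n−2`) with `deg_T(r) ≥ 3` and `deg_T(s) ≥ 3` together with a
`(ν−n)`-matching `Y` such that `{N_T[p₁], N_T[p₄], …, N_T[p_{3n−2}]} ∪ Y` and
`{N_T[p₂], N_T[p₅], …, N_T[p_{3n−1}]} ∪ Y` are both `ν`-matchings of `𝒩(T)`. -/
def CondC2 [Fintype V] (G : SimpleGraph V) (ν : ℕ) : Prop :=
  ¬ ∃ (n : ℕ) (p : ℕ → V),
      1 ≤ n ∧
      (∀ i j, i < 3 * n - 1 → j < 3 * n - 1 → p i = p j → i = j) ∧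
      (∀ i, i + 1 < 3 * n - 1 → G.Adj (p i) (p (i + 1))) ∧
      3 ≤ G.degree (p 0) ∧ 3 ≤ G.degree (p (3 * n - 2)) ∧
      ∃ Y : Finset (Finset V),
        IsNMatching G (ν - n) Y ∧
        IsNMatching G ν ((Finset.range n).image (fun i => closedNbhd G (p (3 * i))) ∪ Y) ∧
        IsNMatching G ν ((Finset.range n).image (fun i => closedNbhd G (p (3 * i + 1))) ∪ Y)

section Helpers
variable [Fintype V] {G : SimpleGraph V}

lemma mem_closedNbhd' {u v : V} : v ∈ closedNbhd G u ↔ v = u ∨ G.Adj u v := by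
  simp [closedNbhd]

lemma self_mem_closedNbhd' (u : V) : u ∈ closedNbhd G u := by simp [closedNbhd]

omit [Fintype V] in
lemma induce_adj_mk {r a b : V} (ha : a ≠ r) (hb : b ≠ r) (h : G.Adj a b) :
    (SimpleGraph.induce {x : V | x ≠ r} G).Adj ⟨a, ha⟩ ⟨b, hb⟩ := by
  simpa using h

omit [Fintype V] in
lemma no_reach_avoid (hT : G.IsTree) {r v s : V} (hrv : G.Adj r v) (hrs : G.Adj r s)
    (hvs : v ≠ s)
    (h : (SimpleGraph.induce {x : V | x ≠ r} G).Reachable ⟨v, hrv.ne'⟩ ⟨s, hrs.ne'⟩) :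
    False := by
  obtain ⟨w⟩ := h
  let f := (SimpleGraph.Embedding.induce (G := G) {x : V | x ≠ r}).toHom
  let w' : G.Walk v s := (w.map f).copy rfl rfl
  have hw' : ∀ x ∈ w'.support, x ≠ r := by
    intro x hx
    change x ∈ ((w.map f).copy rfl rfl).support at hx
    rw [SimpleGraph.Walk.support_copy, SimpleGraph.Walk.support_map] at hx
    obtain ⟨⟨y, hy⟩, -, rfl⟩ := List.mem_map.mp hx
    exact hy
  have hq : (SimpleGraph.Walk.cons hrv.symm (SimpleGraph.Walk.cons hrs SimpleGraph.Walk.nil) :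
      G.Walk v s).IsPath := by
    simp [SimpleGraph.Walk.isPath_def, hrv.ne', hvs, hrs.ne]
  have heq := (hT.existsUnique_path v s).unique w'.toPath.2 hq
  have hrp : r ∈ (w'.toPath : G.Walk v s).support := by
    rw [heq]; simp
  exact hw' r (SimpleGraph.Walk.support_toPath_subset _ hrp) rfl

lemma closedNbhd_mk_eq {r u : V} (hru : r ∉ closedNbhd G u) {v : V} (hv : v ∈ closedNbhd G u)
    (hvr : v ≠ r) (hur : u ≠ r) :
    (SimpleGraph.induce {x : V | x ≠ r} G).connectedComponentMk ⟨v, hvr⟩ =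
    (SimpleGraph.induce {x : V | x ≠ r} G).connectedComponentMk ⟨u, hur⟩ := by
  rcases mem_closedNbhd'.mp hv with rfl | hadj
  · rfl
  · exact SimpleGraph.ConnectedComponent.sound (induce_adj_mk hvr hur hadj.symm).reachable

lemma closedNbhd_subset_compVerts {r u : V} (hru : r ∉ closedNbhd G u) {c}
    {v : V} (hv : v ∈ closedNbhd G u) (hvc : v ∈ compVerts G r c) :
    ∀ w ∈ closedNbhd G u, w ∈ compVerts G r c := by
  have hur : u ≠ r := fun h => hru (h ▸ self_mem_closedNbhd' u)
  obtain ⟨hvr, hc⟩ := hvc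
  intro w hw
  have hwr : w ≠ r := fun h => hru (h ▸ hw)
  exact ⟨hwr, by rw [closedNbhd_mk_eq hru hw hwr hur, ← closedNbhd_mk_eq hru hv hvr hur, hc]⟩

omit [Fintype V] in
lemma mem_matchPart {M : Finset (Finset V)} {W : Set V} {F : Finset V} :
    F ∈ matchPart M W ↔ F ∈ M ∧ ∀ v ∈ F, v ∈ W := by
  simp [matchPart]

end Helpers


/-- Remark 4.1: let `T` be a tree satisfying (C1) and (C2), let `M`, `N` be `ν`-matchings
with `N_T[r] ∈ M`, `N_T[t] ∈ N`, `N_T[r] ∩ N_T[t] = {s}` and `deg_T(r), deg_T(t) ≥ 2`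
(so that `r, s, t` is a path in `T`).  Then `deg_T(s) = 2` in each of the two cases:
(a) `|N_{T₁}| = |M_{T₁}| + 1` for the connected component `T₁` of `T \ {r}` containing
`t`; (b) `N_T[r]` is disjoint from every facet of `N` other than `N_T[t]`. -/
theorem degree_eq_two_of_conditions
    [Fintype V] (G : SimpleGraph V) (hT : G.IsTree)
    (ν : ℕ) (hν : ∀ k M, IsNMatching G k M → k ≤ ν)
    (hC1 : CondC1 G ν) (hC2 : CondC2 G ν)
    (M N : Finset (Finset V)) (hM : IsNMatching G ν M) (hN : IsNMatching G ν N)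
    (r s t : V) (hrM : closedNbhd G r ∈ M) (htN : closedNbhd G t ∈ N)
    (hint : closedNbhd G r ∩ closedNbhd G t = {s})
    (hdr : 2 ≤ G.degree r) (hdt : 2 ≤ G.degree t)
    (hrs : G.Adj r s) (hst : G.Adj s t) (hrt : t ≠ r) :
    ((matchPart N (compVerts G r
          ((SimpleGraph.induce {v : V | v ≠ r} G).connectedComponentMk ⟨t, hrt⟩))).card =
        (matchPart M (compVerts G r
          ((SimpleGraph.induce {v : V | v ≠ r} G).connectedComponentMk ⟨t, hrt⟩))).card + 1 →
      G.degree s = 2) ∧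
    ((∀ F ∈ N, F ≠ closedNbhd G t → Disjoint (closedNbhd G r) F) →
      G.degree s = 2) := by
  obtain ⟨hMcard, hMfac, hMdis⟩ := hM
  obtain ⟨hNcard, hNfac, hNdis⟩ := hN
  have hsr : s ≠ r := hrs.ne'
  have hsmr : s ∈ closedNbhd G r := mem_closedNbhd'.mpr (Or.inr hrs)
  have hsmt : s ∈ closedNbhd G t := mem_closedNbhd'.mpr (Or.inr hst.symm)
  have hrnt : r ∉ closedNbhd G t := by
    intro h
    have hmem : r ∈ ({s} : Finset V) := by
      rw [← hint]; exact Finset.mem_inter.mpr ⟨self_mem_closedNbhd' r, h⟩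
    exact hsr (Finset.mem_singleton.mp hmem).symm
  have htnr : t ∉ closedNbhd G r := by
    intro h
    have hmem : t ∈ ({s} : Finset V) := by
      rw [← hint]; exact Finset.mem_inter.mpr ⟨h, self_mem_closedNbhd' t⟩
    exact hst.ne' (Finset.mem_singleton.mp hmem)
  have hnadjrt : ¬ G.Adj r t := fun h => hrnt (mem_closedNbhd'.mpr (Or.inr h.symm))
  have hNe : closedNbhd G r ≠ closedNbhd G t := fun h => htnr (h ▸ self_mem_closedNbhd' t)
  have hν1 : 1 ≤ ν := hMcard ▸ Finset.card_pos.mpr ⟨_, hrM⟩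
  have hdeg2 : 2 ≤ G.degree s := by
    have hsubs : ({r, t} : Finset V) ⊆ G.neighborFinset s := by
      intro x hx
      rw [SimpleGraph.mem_neighborFinset]
      rcases Finset.mem_insert.mp hx with h | h
      · rw [h]; exact hrs.symm
      · rw [Finset.mem_singleton.mp h]; exact hst
    have hcard := Finset.card_le_card hsubs
    rwa [Finset.card_pair (Ne.symm hrt), SimpleGraph.card_neighborFinset_eq_degree] at hcard
  -- the key reduction to condition (C1)
  have key : ∀ Y : Finset (Finset V), IsNMatching G (ν - 1) Y →
      IsNMatching G ν (insert (closedNbhd G r) Y) →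
      IsNMatching G ν (insert (closedNbhd G t) Y) → G.degree s = 2 := by
    intro Y hY hYr hYt
    by_contra hne
    have hdeg3 : 3 ≤ G.degree s := by omega
    have hdr' : 1 < (G.neighborFinset r).card := by
      rw [SimpleGraph.card_neighborFinset_eq_degree]; omega
    have hdt' : 1 < (G.neighborFinset t).card := by
      rw [SimpleGraph.card_neighborFinset_eq_degree]; omega
    obtain ⟨r1, hr1mem, hr1s⟩ := Finset.exists_mem_ne hdr' s
    obtain ⟨t1, ht1mem, ht1s⟩ := Finset.exists_mem_ne hdt' s
    have har1 : G.Adj r r1 := (SimpleGraph.mem_neighborFinset G r r1).mp hr1mem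
    have hat1 : G.Adj t t1 := (SimpleGraph.mem_neighborFinset G t t1).mp ht1mem
    have hr1t : r1 ≠ t := fun h => hnadjrt (h ▸ har1)
    have ht1r : t1 ≠ r := fun h => hnadjrt (h ▸ hat1).symm
    have hr1t1 : r1 ≠ t1 := by
      rintro rfl
      refine no_reach_avoid hT har1 hrs hr1s ?_
      have h1 : (SimpleGraph.induce {x : V | x ≠ r} G).Adj ⟨r1, har1.ne'⟩ ⟨t, hrt⟩ :=
        induce_adj_mk har1.ne' hrt hat1.symm
      have h2 : (SimpleGraph.induce {x : V | x ≠ r} G).Adj ⟨t, hrt⟩ ⟨s, hrs.ne'⟩ :=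
        induce_adj_mk hrt hrs.ne' hst.symm
      exact h1.reachable.trans h2.reachable
    have hpw : List.Pairwise (· ≠ ·) [r1, r, s, t, t1] := by
      refine List.Pairwise.cons ?_ (List.Pairwise.cons ?_ (List.Pairwise.cons ?_
        (List.Pairwise.cons ?_ (List.pairwise_singleton _ _))))
      · intro a ha
        fin_cases ha
        exacts [har1.ne', hr1s, hr1t, hr1t1]
      · intro a ha
        fin_cases ha
        exacts [hrs.ne, Ne.symm hrt, Ne.symm ht1r]
      · intro a ha
        fin_cases ha
        exacts [hst.ne, Ne.symm ht1s]
      · intro a ha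
        fin_cases ha
        exacts [hat1.ne]
    have hNrY : insert (closedNbhd G r) Y ≠ insert (closedNbhd G t) Y := by
      intro h
      have h1 : closedNbhd G r ∈ Y := by
        have hm := Finset.mem_insert_self (closedNbhd G r) Y
        rw [h] at hm
        rcases Finset.mem_insert.mp hm with h' | h'
        · exact absurd h' hNe
        · exact h'
      have h2 : closedNbhd G t ∈ Y := by
        have hm := Finset.mem_insert_self (closedNbhd G t) Y
        rw [← h] at hm
        rcases Finset.mem_insert.mp hm with h' | h'
        · exact absurd h'.symm hNe
        · exact h'
      exact Finset.disjoint_left.mp (hY.2.2 _ h1 _ h2 hNe) hsmr hsmt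
    exact hC1 ⟨r1, r, s, t, t1, hpw, har1.symm, hrs, hst, hat1, hdeg3,
      Y, hY, hYr, hYt, hNrY⟩
  constructor
  · -- case (a)
    intro ha
    set c := (SimpleGraph.induce {v : V | v ≠ r} G).connectedComponentMk ⟨t, hrt⟩ with hc
    set T₁ := compVerts G r c with hT₁
    have hrT₁ : r ∉ T₁ := by rintro ⟨h, -⟩; exact h rfl
    have htinT₁ : ∀ v ∈ closedNbhd G t, v ∈ T₁ := by
      intro v hv
      rcases mem_closedNbhd'.mp hv with rfl | hadj
      · exact ⟨hrt, rfl⟩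
      · have hvr : v ≠ r := by rintro rfl; exact hnadjrt hadj.symm
        exact ⟨hvr,
          SimpleGraph.ConnectedComponent.sound (induce_adj_mk hvr hrt hadj.symm).reachable⟩
    have hsT₁ : s ∈ T₁ := htinT₁ s hsmt
    set P := matchPart M T₁ with hP
    set Q := matchPart N T₁ with hQdef
    have hNtQ : closedNbhd G t ∈ Q := mem_matchPart.mpr ⟨htN, htinT₁⟩
    have hNrnotP : closedNbhd G r ∉ P :=
      fun h => hrT₁ ((mem_matchPart.mp h).2 r (self_mem_closedNbhd' r))
    have hdisNr : ∀ F ∈ M, F ≠ closedNbhd G r → Disjoint F (closedNbhd G r) :=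
      fun F hF h => hMdis F hF _ hrM h
    have hMout : ∀ F ∈ M, F ∉ P → F ≠ closedNbhd G r → ∀ v ∈ F, v ∉ T₁ := by
      intro F hF hFP hFr v hv hvT
      obtain ⟨u, hu, -⟩ := hMfac F hF
      subst hu
      have hrF : r ∉ closedNbhd G u := fun h =>
        Finset.disjoint_left.mp (hdisNr _ hF hFr) h (self_mem_closedNbhd' r)
      exact hFP (mem_matchPart.mpr ⟨hF, closedNbhd_subset_compVerts hrF hv hvT⟩)
    have hNin : ∀ F ∈ Q, F ≠ closedNbhd G t → Disjoint (closedNbhd G r) F := by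
      intro F hFQ hFt
      rw [Finset.disjoint_left]
      intro v hvNr hvF
      obtain ⟨hFN, hFT⟩ := mem_matchPart.mp hFQ
      obtain ⟨hvr, hvc⟩ := hFT v hvF
      have hadj : G.Adj r v := by
        rcases mem_closedNbhd'.mp hvNr with rfl | h
        · exact absurd rfl hvr
        · exact h
      have hvs : v ≠ s := by
        rintro rfl
        exact Finset.disjoint_left.mp (hNdis F hFN _ htN hFt) hvF hsmt
      refine no_reach_avoid hT hadj hrs hvs ?_
      obtain ⟨hsr', hsc⟩ := hsT₁
      exact SimpleGraph.ConnectedComponent.exact (hvc.trans hsc.symm)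
    set Y := (M \ insert (closedNbhd G r) P) ∪ Q.erase (closedNbhd G t) with hYdef
    have hYmem : ∀ F ∈ Y, (F ∈ M ∧ F ∉ P ∧ F ≠ closedNbhd G r) ∨
        (F ∈ Q ∧ F ≠ closedNbhd G t) := by
      intro F hF
      rcases Finset.mem_union.mp hF with h | h
      · obtain ⟨h1, h2⟩ := Finset.mem_sdiff.mp h
        exact Or.inl ⟨h1, fun hp => h2 (Finset.mem_insert_of_mem hp),
          fun he => h2 (he ▸ Finset.mem_insert_self _ _)⟩
      · exact Or.inr ⟨Finset.mem_of_mem_erase h, Finset.ne_of_mem_erase h⟩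
    have hQsub : ∀ F ∈ Q, ∀ v ∈ F, v ∈ T₁ := fun F hF => (mem_matchPart.mp hF).2
    have hQN : ∀ F ∈ Q, F ∈ N := fun F hF => (mem_matchPart.mp hF).1
    have hdisUnion : Disjoint (M \ insert (closedNbhd G r) P) (Q.erase (closedNbhd G t)) := by
      rw [Finset.disjoint_left]
      intro F h1 h2
      obtain ⟨hFM, hFn⟩ := Finset.mem_sdiff.mp h1
      have hout := hMout F hFM (fun hp => hFn (Finset.mem_insert_of_mem hp))
        (fun he => hFn (he ▸ Finset.mem_insert_self _ _))
      have hFQ := Finset.mem_of_mem_erase h2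
      obtain ⟨u, hu, -⟩ := hNfac F (hQN _ hFQ)
      have huF : u ∈ F := by rw [hu]; exact self_mem_closedNbhd' u
      exact hout u huF (hQsub _ hFQ u huF)
    have hPM : insert (closedNbhd G r) P ⊆ M := by
      intro F hF
      rcases Finset.mem_insert.mp hF with rfl | hF
      · exact hrM
      · exact (mem_matchPart.mp hF).1
    have hPcard : (insert (closedNbhd G r) P).card = P.card + 1 :=
      Finset.card_insert_of_notMem hNrnotP
    have hPle : P.card + 1 ≤ ν := by
      rw [← hPcard, ← hMcard]; exact Finset.card_le_card hPM
    have hYcard : Y.card = ν - 1 := by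
      rw [hYdef, Finset.card_union_of_disjoint hdisUnion, Finset.card_sdiff_of_subset hPM,
        Finset.card_erase_of_mem hNtQ, hMcard, hPcard, ha]
      omega
    have hNrnotY : closedNbhd G r ∉ Y := by
      intro h
      rcases hYmem _ h with ⟨-, -, h'⟩ | ⟨hQ', -⟩
      · exact h' rfl
      · exact hrT₁ (hQsub _ hQ' r (self_mem_closedNbhd' r))
    have hNtnotY : closedNbhd G t ∉ Y := by
      intro h
      rcases hYmem _ h with ⟨hFM, -, hFr⟩ | ⟨-, h'⟩
      · exact Finset.disjoint_left.mp (hdisNr _ hFM hFr) hsmt hsmr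
      · exact h' rfl
    have hYfac : ∀ F ∈ Y, IsNFacet G F := by
      intro F hF
      rcases hYmem _ hF with ⟨h, -, -⟩ | ⟨h, -⟩
      · exact hMfac _ h
      · exact hNfac _ (hQN _ h)
    have hYdis : ∀ F ∈ Y, ∀ F' ∈ Y, F ≠ F' → Disjoint F F' := by
      intro F hF F' hF' hne'
      rcases hYmem _ hF with ⟨h1, h2, h3⟩ | ⟨h1, h2⟩ <;>
        rcases hYmem _ hF' with ⟨h1', h2', h3'⟩ | ⟨h1', h2'⟩
      · exact hMdis _ h1 _ h1' hne'
      · rw [Finset.disjoint_left]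
        intro v hv hv'
        exact hMout F h1 h2 h3 v hv (hQsub _ h1' v hv')
      · rw [Finset.disjoint_left]
        intro v hv hv'
        exact hMout F' h1' h2' h3' v hv' (hQsub _ h1 v hv)
      · exact hNdis _ (hQN _ h1) _ (hQN _ h1') hne'
    apply key Y ⟨hYcard, hYfac, hYdis⟩
    · refine ⟨?_, ?_, ?_⟩
      · rw [Finset.card_insert_of_notMem hNrnotY, hYcard]; omega
      · intro F hF
        rcases Finset.mem_insert.mp hF with rfl | hF
        · exact hMfac _ hrM
        · exact hYfac _ hF
      · intro F hF F' hF' hne'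
        rcases Finset.mem_insert.mp hF with rfl | hF <;>
          rcases Finset.mem_insert.mp hF' with rfl | hF'
        · exact absurd rfl hne'
        · rcases hYmem _ hF' with ⟨h1, h2, h3⟩ | ⟨h1, h2⟩
          · exact (hdisNr _ h1 h3).symm
          · exact hNin _ h1 h2
        · rcases hYmem _ hF with ⟨h1, h2, h3⟩ | ⟨h1, h2⟩
          · exact hdisNr _ h1 h3
          · exact (hNin _ h1 h2).symm
        · exact hYdis _ hF _ hF' hne'
    · refine ⟨?_, ?_, ?_⟩
      · rw [Finset.card_insert_of_notMem hNtnotY, hYcard]; omega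
      · intro F hF
        rcases Finset.mem_insert.mp hF with rfl | hF
        · exact hNfac _ htN
        · exact hYfac _ hF
      · intro F hF F' hF' hne'
        rcases Finset.mem_insert.mp hF with rfl | hF <;>
          rcases Finset.mem_insert.mp hF' with rfl | hF'
        · exact absurd rfl hne'
        · rcases hYmem _ hF' with ⟨h1, h2, h3⟩ | ⟨h1, h2⟩
          · rw [Finset.disjoint_left]
            intro v hv hv'
            exact hMout _ h1 h2 h3 v hv' (htinT₁ v hv)
          · exact hNdis _ htN _ (hQN _ h1) (Ne.symm h2)
        · rcases hYmem _ hF with ⟨h1, h2, h3⟩ | ⟨h1, h2⟩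
          · rw [Finset.disjoint_left]
            intro v hv hv'
            exact hMout _ h1 h2 h3 v hv (htinT₁ v hv')
          · exact hNdis _ (hQN _ h1) _ htN h2
        · exact hYdis _ hF _ hF' hne'
  · -- case (b)
    intro hb
    have hNrnotN : closedNbhd G r ∉ N := by
      intro h
      exact Finset.disjoint_left.mp (hNdis _ h _ htN hNe) hsmr hsmt
    apply key (N.erase (closedNbhd G t))
    · refine ⟨?_, ?_, ?_⟩
      · rw [Finset.card_erase_of_mem htN, hNcard]
      · exact fun F hF => hNfac F (Finset.mem_of_mem_erase hF)
      · exact fun F hF F' hF' h =>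
          hNdis F (Finset.mem_of_mem_erase hF) F' (Finset.mem_of_mem_erase hF') h
    · refine ⟨?_, ?_, ?_⟩
      · rw [Finset.card_insert_of_notMem
            (fun h => hNrnotN (Finset.mem_of_mem_erase h)),
          Finset.card_erase_of_mem htN, hNcard]
        omega
      · intro F hF
        rcases Finset.mem_insert.mp hF with rfl | hF
        · exact hMfac _ hrM
        · exact hNfac _ (Finset.mem_of_mem_erase hF)
      · intro F hF F' hF' hne'
        rcases Finset.mem_insert.mp hF with rfl | hF <;>
          rcases Finset.mem_insert.mp hF' with rfl | hF'
        · exact absurd rfl hne'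
        · exact hb _ (Finset.mem_of_mem_erase hF') (Finset.ne_of_mem_erase hF')
        · exact (hb _ (Finset.mem_of_mem_erase hF) (Finset.ne_of_mem_erase hF)).symm
        · exact hNdis _ (Finset.mem_of_mem_erase hF) _ (Finset.mem_of_mem_erase hF') hne'
    · rw [Finset.insert_erase htN]
      exact ⟨hNcard, hNfac, hNdis⟩
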